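/- The readback translation is a left inverse of the value-naming transformation: for every CPS term M, R(C_vn(M)) ≡ M. -/
import Mathlib


/-!
Statement 4: The readback translation is a left inverse of the value-naming
transformation: for every CPS term `M`, `R(C_vn(M)) ≡ M`.
-/

namespace CostLabelling

abbrev Var := ℕ
abbrev Label := ℕ

inductive Tm : Type where
  | var : Var → Tm
  | lam : List Var → Tm → Tm
  | app : Tm → List Tm → Tm
  | tup : List Tm → Tm
  | proj : ℕ → Tm → Tm
  | letin : Var → Tm → Tm → Tm
  | pre : Label → Tm → Tm
  | post : Tm → Label → Tm

inductive IsValue : Tm → Prop where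
  | var : ∀ x, IsValue (.var x)
  | lam : ∀ xs M, IsValue (.lam xs M)
  | tup : ∀ Vs, (∀ V ∈ Vs, IsValue V) → IsValue (.tup Vs)

mutual
def subst (V : Tm) (x : Var) : Tm → Tm
  | .var y => if y = x then V else .var y
  | .lam xs M => if x ∈ xs then .lam xs M else .lam xs (subst V x M)
  | .app M Ns => .app (subst V x M) (substList V x Ns)
  | .tup Ms => .tup (substList V x Ms)
  | .proj i M => .proj i (subst V x M)
  | .letin y M N => .letin y (subst V x M) (if y = x then N else subst V x N)
  | .pre l M => .pre l (subst V x M)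
  | .post M l => .post (subst V x M) l
def substList (V : Tm) (x : Var) : List Tm → List Tm
  | [] => []
  | M :: Ms => subst V x M :: substList V x Ms
end

mutual
def fv : Tm → List Var
  | .var x => [x]
  | .lam xs M => (fv M).filter (fun y => y ∉ xs)
  | .app M Ns => fv M ++ fvList Ns
  | .tup Ms => fvList Ms
  | .proj _ M => fv M
  | .letin y M N => fv M ++ (fv N).filter (fun z => z ≠ y)
  | .pre _ M => fv M
  | .post M _ => fv M
def fvList : List Tm → List Var
  | [] => []
  | M :: Ms => fv M ++ fvList Ms
end

/-- `V` is not a variable. -/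
def NonVar (V : Tm) : Prop := ∀ x, V ≠ .var x

mutual
/-- Values of the CPS calculus `λℓ_cps`. -/
inductive CpsVal : Tm → Prop where
  | var : ∀ x, CpsVal (.var x)
  | lam : ∀ xs M, CpsTm M → CpsVal (.lam xs M)
  | tup : ∀ Vs, (∀ V ∈ Vs, CpsVal V) → CpsVal (.tup Vs)

/-- Terms of the CPS calculus `λℓ_cps` :
`M ::= @(V,V⁺) | let x = πᵢ(V) in M | ℓ > M`. -/
inductive CpsTm : Tm → Prop where
  | app : ∀ V Ws, CpsVal V → (∀ W ∈ Ws, CpsVal W) → Ws ≠ [] →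
      CpsTm (.app V Ws)
  | letproj : ∀ x i V M, CpsVal V → CpsTm M →
      CpsTm (.letin x (.proj i V) M)
  | pre : ∀ l M, CpsTm M → CpsTm (.pre l M)
end

mutual
/-- `Vn M N` : the transformation in value named form maps the CPS term `M`
to `N` (`C_vn(M) ≡ N`); fresh names are chosen nondeterministically. -/
inductive Vn : Tm → Tm → Prop where
  | app_vars : ∀ (x : Var) (zs : List Var), Vn (.app (.var x) (zs.map .var)) (.app (.var x) (zs.map .var))
  | app_head : ∀ V Ms y N R, NonVar V → y ∉ fv (.app V Ms) →
      Vn (.app (.var y) Ms) N → VnVal V y N R → Vn (.app V Ms) R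
  | app_arg : ∀ (x : Var) (vs : List Var) V Ms y N R, NonVar V →
      y ∉ fv (.app (.var x) (vs.map .var ++ V :: Ms)) →
      Vn (.app (.var x) (vs.map .var ++ .var y :: Ms)) N → VnVal V y N R →
      Vn (.app (.var x) (vs.map .var ++ V :: Ms)) R
  | letp_var : ∀ x i z M N, Vn M N →
      Vn (.letin x (.proj i (.var z)) M) (.letin x (.proj i (.var z)) N)
  | letp_val : ∀ x i V M y N R, NonVar V →
      y ∉ fv (.letin x (.proj i V) M) →
      Vn M N → VnVal V y (.letin x (.proj i (.var y)) N) R →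
      Vn (.letin x (.proj i V) M) R
  | pre : ∀ l M N, Vn M N → Vn (.pre l M) (.pre l N)

/-- `VnVal V y N R` : `R ≡ Φ(V,y)[N]`, where `Φ(V,y)` is the value-naming
context of the paper (a sequence of let-bindings naming all non-variable
values of `V`, the outermost one bound to `y`). -/
inductive VnVal : Tm → Var → Tm → Tm → Prop where
  | lam : ∀ xs M M' y N, Vn M M' →
      VnVal (.lam xs M) y N (.letin y (.lam xs M') N)
  | tup_vars : ∀ (zs : List Var) (y : Var) (N : Tm),
      VnVal (.tup (zs.map .var)) y N (.letin y (.tup (zs.map .var)) N)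
  | tup_step : ∀ (vs : List Var) V Ws z y N R R', NonVar V →
      z ∉ fv (.tup (vs.map .var ++ V :: Ws)) → z ∉ fv N → z ≠ y →
      VnVal (.tup (vs.map .var ++ .var z :: Ws)) y N R →
      VnVal V z R R' →
      VnVal (.tup (vs.map .var ++ V :: Ws)) y N R'
end

mutual
/-- The readback translation `R` from value named CPS terms to CPS terms:
it inlines value definitions, `R(let x = V in M) = [R(V)/x]R(M)`, and is
homomorphic on the other constructs. -/
def rb : Tm → Tm
  | .var x => .var x
  | .lam xs M => .lam xs (rb M)
  | .app M Ns => .app (rb M) (rbList Ns)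
  | .tup Ms => .tup (rbList Ms)
  | .proj i M => .proj i (rb M)
  | .letin x (.proj i N) M => .letin x (.proj i (rb N)) (rb M)
  | .letin x V M => subst (rb V) x (rb M)
  | .pre l M => .pre l (rb M)
  | .post M l => .post (rb M) l
def rbList : List Tm → List Tm
  | [] => []
  | M :: Ms => rb M :: rbList Ms
end

-- ===== auxiliary lemmas =====

lemma fvList_append (A B : List Tm) : fvList (A ++ B) = fvList A ++ fvList B := by
  induction A with
  | nil => simp [fvList]
  | cons M Ms ih => simp [fvList, ih]

lemma fvList_map_var (zs : List Var) : fvList (zs.map .var) = zs := by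
  induction zs with
  | nil => simp [fvList]
  | cons z zs ih => simp [fvList, fv, ih]

lemma rbList_map_var (zs : List Var) : rbList (zs.map .var) = zs.map .var := by
  induction zs with
  | nil => simp [rbList]
  | cons z zs ih => simp [rbList, rb, ih]

lemma substList_append (V : Tm) (x : Var) (A B : List Tm) :
    substList V x (A ++ B) = substList V x A ++ substList V x B := by
  induction A with
  | nil => simp [substList]
  | cons M Ms ih => simp [substList, ih]

lemma mem_fvList {w : Var} {Ms : List Tm} : w ∈ fvList Ms ↔ ∃ M ∈ Ms, w ∈ fv M := by
  induction Ms with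
  | nil => simp [fvList]
  | cons M Ms ih => simp [fvList, ih]


@[simp] lemma mem_fv_lam {w : Var} {xs : List Var} {M : Tm} :
    w ∈ fv (.lam xs M) ↔ w ∈ fv M ∧ w ∉ xs := by
  simp [fv, List.mem_filter]

@[simp] lemma mem_fv_letin {w : Var} {y : Var} {M N : Tm} :
    w ∈ fv (.letin y M N) ↔ w ∈ fv M ∨ (w ∈ fv N ∧ w ≠ y) := by
  simp [fv, List.mem_filter]

mutual
lemma subst_not_fv (V : Tm) (x : Var) : ∀ M, x ∉ fv M → subst V x M = M
  | .var y, h => by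
      simp [fv] at h
      simp [subst, Ne.symm h]
  | .lam xs M, h => by
      by_cases hx : x ∈ xs
      · simp [subst, hx]
      · rw [show (Tm.lam xs M) = .lam xs M from rfl] at h
        simp only [mem_fv_lam, not_and, not_not] at h
        have hM : x ∉ fv M := fun hc => hx (h hc)
        simp [subst, hx, subst_not_fv V x M hM]
  | .app M Ns, h => by
      simp [fv] at h
      simp [subst, subst_not_fv V x M h.1, substList_not_fv V x Ns h.2]
  | .tup Ms, h => by
      simp only [fv] at h
      simp [subst, substList_not_fv V x Ms h]
  | .proj i M, h => by
      simp only [fv] at h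
      simp [subst, subst_not_fv V x M h]
  | .letin y M N, h => by
      rw [show (Tm.letin y M N) = .letin y M N from rfl] at h
      simp only [mem_fv_letin, not_or, not_and, not_not] at h
      by_cases hy : y = x
      · simp [subst, hy, subst_not_fv V x M h.1]
      · have hN : x ∉ fv N := fun hc => hy (h.2 hc).symm
        simp [subst, hy, subst_not_fv V x M h.1, subst_not_fv V x N hN]
  | .pre l M, h => by
      simp only [fv] at h
      simp [subst, subst_not_fv V x M h]
  | .post M l, h => by
      simp only [fv] at h
      simp [subst, subst_not_fv V x M h]
lemma substList_not_fv (V : Tm) (x : Var) : ∀ Ms, x ∉ fvList Ms → substList V x Ms = Ms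
  | [], _ => by simp [substList]
  | M :: Ms, h => by
      simp [fvList] at h
      simp [substList, subst_not_fv V x M h.1, substList_not_fv V x Ms h.2]
end

lemma substList_map_var (V : Tm) (x : Var) (zs : List Var) (h : x ∉ zs) :
    substList V x (zs.map .var) = zs.map .var := by
  apply substList_not_fv
  rwa [fvList_map_var]

mutual
lemma mem_fv_subst {w : Var} (V : Tm) (x : Var) :
    ∀ M, w ∈ fv (subst V x M) → w ∈ fv V ∨ (w ∈ fv M ∧ w ≠ x)
  | .var y, h => by
      by_cases hy : y = x
      · simp [subst, hy] at h; exact Or.inl h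
      · simp [subst, hy, fv] at h; subst h; exact Or.inr ⟨by simp [fv], hy⟩
  | .lam xs M, h => by
      by_cases hx : x ∈ xs
      · simp only [subst, hx, if_pos] at h
        refine Or.inr ⟨h, ?_⟩
        rw [mem_fv_lam] at h
        rintro rfl; exact h.2 hx
      · simp only [subst, hx, if_neg, not_false_iff] at h
        rw [mem_fv_lam] at h ⊢
        rcases mem_fv_subst V x M h.1 with h' | h'
        · exact Or.inl h'
        · exact Or.inr ⟨⟨h'.1, h.2⟩, h'.2⟩
  | .app M Ns, h => by
      simp only [subst, fv, List.mem_append] at h ⊢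
      rcases h with h | h
      · rcases mem_fv_subst V x M h with h' | h'
        · exact Or.inl h'
        · exact Or.inr ⟨Or.inl h'.1, h'.2⟩
      · rcases mem_fvList_subst V x Ns h with h' | h'
        · exact Or.inl h'
        · exact Or.inr ⟨Or.inr h'.1, h'.2⟩
  | .tup Ms, h => by
      simp only [subst, fv] at h ⊢
      exact mem_fvList_subst V x Ms h
  | .proj i M, h => by
      simp only [subst, fv] at h ⊢
      exact mem_fv_subst V x M h
  | .letin y M N, h => by
      by_cases hy : y = x
      · simp only [subst, hy, if_pos, mem_fv_letin] at h
        rcases h with h | h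
        · rcases mem_fv_subst V x M h with h' | h'
          · exact Or.inl h'
          · exact Or.inr ⟨by rw [mem_fv_letin]; exact Or.inl h'.1, h'.2⟩
        · exact Or.inr ⟨by rw [mem_fv_letin]; exact Or.inr ⟨h.1, by rw [hy]; exact h.2⟩, h.2⟩
      · simp only [subst, hy, if_neg, not_false_iff, mem_fv_letin] at h
        rcases h with h | h
        · rcases mem_fv_subst V x M h with h' | h'
          · exact Or.inl h'
          · exact Or.inr ⟨by rw [mem_fv_letin]; exact Or.inl h'.1, h'.2⟩
        · rcases mem_fv_subst V x N h.1 with h' | h'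
          · exact Or.inl h'
          · exact Or.inr ⟨by rw [mem_fv_letin]; exact Or.inr ⟨h'.1, h.2⟩, h'.2⟩
  | .pre l M, h => by
      simp only [subst, fv] at h ⊢
      exact mem_fv_subst V x M h
  | .post M l, h => by
      simp only [subst, fv] at h ⊢
      exact mem_fv_subst V x M h
lemma mem_fvList_subst {w : Var} (V : Tm) (x : Var) :
    ∀ Ms, w ∈ fvList (substList V x Ms) → w ∈ fv V ∨ (w ∈ fvList Ms ∧ w ≠ x)
  | [], h => by simp [substList, fvList] at h
  | M :: Ms, h => by
      simp only [substList, fvList, List.mem_append] at h ⊢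
      rcases h with h | h
      · rcases mem_fv_subst V x M h with h' | h'
        · exact Or.inl h'
        · exact Or.inr ⟨Or.inl h'.1, h'.2⟩
      · rcases mem_fvList_subst V x Ms h with h' | h'
        · exact Or.inl h'
        · exact Or.inr ⟨Or.inr h'.1, h'.2⟩
end

lemma fv_rb : ∀ M : Tm, ∀ w, w ∈ fv (rb M) → w ∈ fv M := by
  intro M
  induction M using rb.induct (motive_2 := fun Ms => ∀ w, w ∈ fvList (rbList Ms) → w ∈ fvList Ms) with
  | case1 x => intro w h; simpa [rb] using h
  | case2 xs M ih =>
      intro w h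
      simp only [rb, mem_fv_lam] at h ⊢
      exact ⟨ih w h.1, h.2⟩
  | case3 M Ns ih1 ih2 =>
      intro w h
      simp only [rb, fv, List.mem_append] at h ⊢
      exact h.imp (ih1 w) (ih2 w)
  | case4 Ms ih =>
      intro w h
      simp only [rb, fv] at h ⊢
      exact ih w h
  | case5 i M ih =>
      intro w h
      simp only [rb, fv] at h ⊢
      exact ih w h
  | case6 x i N M ihN ihM =>
      intro w h
      simp only [rb] at h
      rw [mem_fv_letin] at h
      rw [mem_fv_letin]
      simp only [fv] at h ⊢
      exact h.imp (ihN w) (fun hh => ⟨ihM w hh.1, hh.2⟩)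
  | case7 x V M hnp ihV ihM =>
      intro w h
      rw [rb.eq_7 x V M hnp] at h
      rw [mem_fv_letin]
      rcases mem_fv_subst (rb V) x (rb M) h with h' | h'
      · exact Or.inl (ihV w h')
      · exact Or.inr ⟨ihM w h'.1, h'.2⟩
  | case8 l M ih =>
      intro w h
      simp only [rb, fv] at h ⊢
      exact ih w h
  | case9 M l ih =>
      intro w h
      simp only [rb, fv] at h ⊢
      exact ih w h
  | case10 =>
      rename_i w h
      simpa [rbList, fvList] using h
  | case11 M Ms ih ihs =>
      rename_i w h
      simp only [rbList, fvList, List.mem_append] at h ⊢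
      exact h.imp (ih w) (ihs w)

lemma fvList_mid (vs : List Var) (t : Tm) (Ws : List Tm) :
    fvList (vs.map .var ++ t :: Ws) = vs ++ (fv t ++ fvList Ws) := by
  simp [fvList_append, fvList_map_var, fvList]

lemma substList_mid (V : Tm) (x : Var) (vs : List Var) (t : Tm) (Ws : List Tm)
    (h1 : x ∉ vs) (h2 : x ∉ fvList Ws) :
    substList V x (vs.map .var ++ t :: Ws) = vs.map .var ++ subst V x t :: Ws := by
  rw [substList_append, substList_map_var V x vs h1]
  simp [substList, substList_not_fv V x Ws h2]

lemma fv_vnval {V : Tm} {y : Var} {N R : Tm} (h : VnVal V y N R) :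
    ∀ w, w ∈ fv V ∨ (w ∈ fv N ∧ w ≠ y) → w ∈ fv R := by
  induction h using VnVal.rec
    (motive_1 := fun M N _ => ∀ w, w ∈ fv M → w ∈ fv N) with
  | app_vars x zs => rename_i w hw; exact hw
  | app_head V Ms y N R hNV hy hvn hvv ih1 ih2 =>
      rename_i w hw
      simp only [fv, List.mem_append] at hw
      rcases hw with hw | hw
      · exact ih2 w (Or.inl hw)
      · refine ih2 w (Or.inr ⟨ih1 w ?_, ?_⟩)
        · simp only [fv, List.mem_append, List.mem_singleton]
          exact Or.inr hw
        · rintro rfl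
          exact hy (by simp only [fv, List.mem_append]; exact Or.inr hw)
  | app_arg x vs V Ms y N R hNV hy hvn hvv ih1 ih2 =>
      rename_i w hw
      simp only [fv, fvList_mid, List.mem_append, List.mem_singleton] at hw
      rcases hw with hw | hw | hw | hw
      · refine ih2 w (Or.inr ⟨ih1 w ?_, ?_⟩)
        · simp only [fv, fvList_mid, List.mem_append, List.mem_singleton]
          exact Or.inl hw
        · rintro rfl
          exact hy (by
            simp only [fv, fvList_mid, List.mem_append, List.mem_singleton]
            exact Or.inl hw)
      · refine ih2 w (Or.inr ⟨ih1 w ?_, ?_⟩)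
        · simp only [fv, fvList_mid, List.mem_append, List.mem_singleton]
          exact Or.inr (Or.inl hw)
        · rintro rfl
          exact hy (by
            simp only [fv, fvList_mid, List.mem_append, List.mem_singleton]
            exact Or.inr (Or.inl hw))
      · exact ih2 w (Or.inl hw)
      · refine ih2 w (Or.inr ⟨ih1 w ?_, ?_⟩)
        · simp only [fv, fvList_mid, List.mem_append, List.mem_singleton]
          exact Or.inr (Or.inr (Or.inr hw))
        · rintro rfl
          exact hy (by
            simp only [fv, fvList_mid, List.mem_append, List.mem_singleton]
            exact Or.inr (Or.inr (Or.inr hw)))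
  | letp_var x i z M N hvn ih =>
      rename_i w hw
      rw [mem_fv_letin] at hw ⊢
      exact hw.imp id (fun hh => ⟨ih w hh.1, hh.2⟩)
  | letp_val x i V M y N R hNV hy hvn hvv ih1 ih2 =>
      rename_i w hw
      rw [mem_fv_letin] at hw
      simp only [fv] at hw
      rcases hw with hw | hw
      · exact ih2 w (Or.inl hw)
      · refine ih2 w (Or.inr ⟨?_, ?_⟩)
        · rw [mem_fv_letin]
          exact Or.inr ⟨ih1 w hw.1, hw.2⟩
        · rintro rfl
          exact hy (by rw [mem_fv_letin]; exact Or.inr hw)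
  | pre l M N hvn ih =>
      rename_i w hw
      simp only [fv] at hw ⊢
      exact ih w hw
  | lam xs M M' y N hvn ih =>
      intro w hw
      rw [mem_fv_letin]
      refine hw.imp ?_ id
      intro hh
      rw [mem_fv_lam] at hh ⊢
      exact ⟨ih w hh.1, hh.2⟩
  | tup_vars zs y N =>
      intro w hw
      rw [mem_fv_letin]
      exact hw
  | tup_step vs V Ws z y N R R' hNV hz1 hz2 hzy h4 h5 ih1 ih2 =>
      intro w hw
      simp only [fv, fvList_mid, List.mem_append] at hw hz1
      rcases hw with (hw | hw | hw) | hw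
      · -- w ∈ vs
        refine ih2 w (Or.inr ⟨ih1 w ?_, ?_⟩)
        · exact Or.inl (by
            simp only [fv, fvList_mid, List.mem_append]
            exact Or.inl hw)
        · rintro rfl; exact hz1 (Or.inl hw)
      · exact ih2 w (Or.inl hw)
      · refine ih2 w (Or.inr ⟨ih1 w ?_, ?_⟩)
        · exact Or.inl (by
            simp only [fv, fvList_mid, List.mem_append]
            exact Or.inr (Or.inr hw))
        · rintro rfl; exact hz1 (Or.inr (Or.inr hw))
      · refine ih2 w (Or.inr ⟨ih1 w (Or.inr hw), ?_⟩)
        rintro rfl; exact hz2 hw.1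

/-- For every CPS term `M`, `R(C_vn(M)) ≡ M`. -/
theorem readback_left_inverse_of_value_naming
    (M N : Tm) (hM : CpsTm M) (hvn : Vn M N) :
    rb N = M := by
  clear hM
  induction hvn using Vn.rec
    (motive_2 := fun V y N R _ =>
      y ∉ fv V → ∀ (F : Tm → Tm) (S : List Var),
        (∀ w, w ∉ S → ∀ W t, subst W w (F t) = F (subst W w t)) →
        (∀ w ∈ S, w ∈ fv N) → y ∉ S → rb N = F (.var y) → rb R = F V) with
  | app_vars x zs => simp [rb, rbList_map_var]
  | app_head V Ms y N R hNV hy hvn hvv ih1 ih2 =>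
      have hyV : y ∉ fv V := fun h => hy (by
        simp only [fv, List.mem_append]; exact Or.inl h)
      have hyMs : y ∉ fvList Ms := fun h => hy (by
        simp only [fv, List.mem_append]; exact Or.inr h)
      refine ih2 hyV (fun t => .app t Ms) (fvList Ms) ?_ ?_ hyMs ?_
      · intro w hw W t
        show Tm.app (subst W w t) (substList W w Ms) = Tm.app (subst W w t) Ms
        rw [substList_not_fv W w Ms hw]
      · intro w hw
        apply fv_rb N w
        rw [ih1]
        simp only [fv, List.mem_append]
        exact Or.inr hw
      · exact ih1
  | app_arg x vs V Ms y N R hNV hy hvn hvv ih1 ih2 =>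
      simp only [fv, fvList_mid, List.mem_append, List.mem_singleton, not_or] at hy
      refine ih2 hy.2.2.1 (fun t => .app (.var x) (vs.map .var ++ t :: Ms))
        (x :: (vs ++ fvList Ms)) ?_ ?_ ?_ ?_
      · intro w hw W t
        simp only [List.mem_cons, List.mem_append, not_or] at hw
        have hxw : ¬ x = w := fun h => hw.1 h.symm
        show Tm.app (subst W w (.var x)) (substList W w (vs.map .var ++ t :: Ms)) = _
        rw [substList_mid W w vs t Ms hw.2.1 hw.2.2]
        simp [subst, hxw]
      · intro w hw
        apply fv_rb N w
        rw [ih1]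
        simp only [fv, fvList_mid, List.mem_append, List.mem_singleton]
        simp only [List.mem_cons, List.mem_append] at hw
        rcases hw with h | h | h
        · exact Or.inl h
        · exact Or.inr (Or.inl h)
        · exact Or.inr (Or.inr (Or.inr h))
      · simp only [List.mem_cons, List.mem_append, not_or]
        exact ⟨hy.1, hy.2.1, hy.2.2.2⟩
      · exact ih1
  | letp_var x i z M N hvn ih => simp [rb, ih]
  | letp_val x i V M y N R hNV hy hvn hvv ih1 ih2 =>
      rw [mem_fv_letin] at hy
      simp only [fv, not_or, not_and] at hy
      refine ih2 hy.1 (fun t => .letin x (.proj i t) M)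
        ((fv M).filter (fun w => w ≠ x)) ?_ ?_ ?_ ?_
      · intro w hw W t
        have hw' : ¬(w ∈ fv M ∧ w ≠ x) := by simpa [List.mem_filter] using hw
        by_cases hx : x = w
        · simp [subst, hx]
        · have hwM : w ∉ fv M := fun hc => hw' ⟨hc, fun e => hx e.symm⟩
          simp [subst, hx, subst_not_fv W w M hwM]
      · intro w hw
        have hw' : w ∈ fv M ∧ w ≠ x := by simpa [List.mem_filter] using hw
        rw [mem_fv_letin]
        refine Or.inr ⟨fv_rb N w ?_, hw'.2⟩
        rw [ih1]; exact hw'.1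
      · simp only [List.mem_filter, decide_eq_true_eq, not_and]
        intro hyM
        by_contra hne
        exact (hy.2 hyM) hne
      · simp [rb, ih1]
  | pre l M N hvn ih => simp [rb, ih]
  | lam xs M M' y N hvn ih =>
      rename_i hyV F S HF HS HyS HN
      rw [rb.eq_7 _ _ _ (fun i N h => by cases h), HN]
      simp only [rb, ih]
      rw [HF y HyS]
      simp [subst]
  | tup_vars zs y N =>
      rename_i hyV F S HF HS HyS HN
      rw [rb.eq_7 _ _ _ (fun i N h => by cases h), HN]
      simp only [rb, rbList_map_var]
      rw [HF y HyS]
      simp [subst]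
  | tup_step vs V Ws z y N R R' hNV hz1 hz2 hzy h4 h5 ih1 ih2 =>
      rename_i hyV F S HF HS HyS HN
      simp only [fv, fvList_mid, List.mem_append, not_or] at hz1 hyV
      have hyT : y ∉ fv (Tm.tup (vs.map .var ++ .var z :: Ws)) := by
        simp only [fv, fvList_mid, List.mem_append, List.mem_singleton, not_or]
        exact ⟨hyV.1, fun h => hzy h.symm, hyV.2.2⟩
      have HR : rb R = F (.tup (vs.map .var ++ .var z :: Ws)) := ih1 hyT F S HF HS HyS HN
      have hzS : z ∉ S := fun h => hz2 (HS z h)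
      refine ih2 hz1.2.1 (fun t => F (.tup (vs.map .var ++ t :: Ws)))
        (S ++ vs ++ fvList Ws) ?_ ?_ ?_ HR
      · intro w hw W t
        simp only [List.mem_append, not_or] at hw
        show subst W w (F (.tup (vs.map .var ++ t :: Ws)))
            = F (.tup (vs.map .var ++ subst W w t :: Ws))
        rw [HF w hw.1.1 W (Tm.tup (vs.map Tm.var ++ t :: Ws))]
        congr 1
        show Tm.tup (substList W w (vs.map .var ++ t :: Ws)) = _
        rw [substList_mid W w vs t Ws hw.1.2 hw.2]
      · intro w hw
        simp only [List.mem_append] at hw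
        rcases hw with (hw | hw) | hw
        · exact fv_vnval h4 w (Or.inr ⟨HS w hw, fun e => HyS (e ▸ hw)⟩)
        · refine fv_vnval h4 w (Or.inl ?_)
          simp only [fv, fvList_mid, List.mem_append]
          exact Or.inl hw
        · refine fv_vnval h4 w (Or.inl ?_)
          simp only [fv, fvList_mid, List.mem_append]
          exact Or.inr (Or.inr hw)
      · simp only [List.mem_append, not_or]
        exact ⟨⟨hzS, hz1.1⟩, hz1.2.2⟩

end CostLabelling
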